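/- Let K ⊆ P(ℝ). The following are equivalent: (i) K is tight, i.e. sup_{μ∈K} μ([−s,s]ᶜ) → 0 as s → ∞; (ii) K is ≤st-bounded, i.e. there exist μ̲, μ̄ ∈ P(ℝ) with μ̲ ≤st μ ≤st μ̄ for all μ ∈ K; (iii) every nonempty subset of K has a least upper bound and a greatest lower bound in (P(ℝ), ≤st); (iv) there exists a nondecreasing function ψ : [0,∞) → [0,∞) with ψ(0) = 0, ψ(s) → ∞ as s → ∞ and sup_{μ∈K} ∫_ℝ ψ(|x|) dμ(x) < ∞. -/

import Mathlib

open MeasureTheory Filter Set Topology NNReal ENNReal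

/-- First order stochastic dominance on `P(ℝ)`. -/
def StOrd (μ ν : ProbabilityMeasure ℝ) : Prop :=
  ∀ s : ℝ, (μ : Measure ℝ) (Ioi s) ≤ (ν : Measure ℝ) (Ioi s)

open ProbabilityTheory in
lemma meas_Ioi_eq (μ : ProbabilityMeasure ℝ) (s : ℝ) :
    (μ : Measure ℝ) (Ioi s) = ENNReal.ofReal (1 - cdf (μ : Measure ℝ) s) := by
  rw [← Set.compl_Iic, prob_compl_eq_one_sub measurableSet_Iic, ← ofReal_cdf,
    ENNReal.ofReal_sub _ (cdf_nonneg _ _), ENNReal.ofReal_one]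

open ProbabilityTheory in
lemma stOrd_iff_cdf (μ ν : ProbabilityMeasure ℝ) :
    StOrd μ ν ↔ ∀ s, cdf (ν : Measure ℝ) s ≤ cdf (μ : Measure ℝ) s := by
  constructor
  · intro h s
    have := h s
    rw [meas_Ioi_eq, meas_Ioi_eq,
      ENNReal.ofReal_le_ofReal_iff (by linarith [cdf_le_one (ν : Measure ℝ) s])] at this
    linarith
  · intro h s
    rw [meas_Ioi_eq, meas_Ioi_eq]
    exact ENNReal.ofReal_le_ofReal (by linarith [h s])

open ProbabilityTheory in
lemma cdf_eq_one_sub (μ : ProbabilityMeasure ℝ) (s : ℝ) :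
    cdf (μ : Measure ℝ) s = 1 - ((μ : Measure ℝ) (Ioi s)).toReal := by
  rw [meas_Ioi_eq, ENNReal.toReal_ofReal (by linarith [cdf_le_one (μ : Measure ℝ) s])]
  ring

open ProbabilityTheory in
lemma tight_lub_glb (A : Set (ProbabilityMeasure ℝ)) (hne : A.Nonempty)
    (ht : Tendsto (fun s : ℝ => ⨆ μ ∈ A, (μ : Measure ℝ) ((Icc (-s) s)ᶜ)) atTop (𝓝 0)) :
    (∃ σ : ProbabilityMeasure ℝ, (∀ μ ∈ A, StOrd μ σ) ∧
        (∀ b, (∀ μ ∈ A, StOrd μ b) → StOrd σ b)) ∧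
      (∃ τ : ProbabilityMeasure ℝ, (∀ μ ∈ A, StOrd τ μ) ∧
        (∀ b, (∀ μ ∈ A, StOrd b μ) → StOrd b τ)) := by
  haveI : Nonempty A := hne.to_subtype
  obtain ⟨μ0, hμ0⟩ := hne
  set G : ℝ → ℝ≥0∞ := fun s => ⨆ μ ∈ A, (μ : Measure ℝ) ((Icc (-s) s)ᶜ) with hGdef
  have hG1 : ∀ s, G s ≤ 1 := fun s => iSup₂_le fun μ _ => prob_le_one
  have hGne : ∀ s, G s ≠ ⊤ := fun s => ((hG1 s).trans_lt one_lt_top).ne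
  have hGto : Tendsto (fun s => (G s).toReal) atTop (𝓝 0) := by
    simpa [Function.comp_def] using (ENNReal.tendsto_toReal (by simp : (0:ℝ≥0∞) ≠ ⊤)).comp ht
  -- least upper bound construction
  constructor
  · set f : ℝ → ℝ := fun s => ⨅ μ : A, cdf ((μ : ProbabilityMeasure ℝ) : Measure ℝ) s with hfdef
    have hbdd : ∀ s, BddBelow (range fun μ : A => cdf ((μ : ProbabilityMeasure ℝ) : Measure ℝ) s) :=
      fun s => ⟨0, by rintro _ ⟨μ, rfl⟩; exact cdf_nonneg _ _⟩
    have hfle : ∀ μ (hμ : μ ∈ A) s, f s ≤ cdf (μ : Measure ℝ) s :=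
      fun μ hμ s => ciInf_le (hbdd s) ⟨μ, hμ⟩
    have hfmono : Monotone f := fun s t hst =>
      le_ciInf fun μ => (ciInf_le (hbdd s) μ).trans ((monotone_cdf _) hst)
    have hf0 : ∀ s, 0 ≤ f s := fun s => le_ciInf fun μ => cdf_nonneg _ _
    have hf1 : ∀ s, f s ≤ 1 := fun s => (hfle μ0 hμ0 s).trans (cdf_le_one _ _)
    have hflb : ∀ s, 1 - (G s).toReal ≤ f s := by
      intro s
      refine le_ciInf fun ⟨μ, hμ⟩ => ?_
      have hsub : Ioi s ⊆ (Icc (-s) s)ᶜ := fun x hx hx' => absurd hx'.2 (not_le.2 hx)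
      have h1 : (μ : Measure ℝ) (Ioi s) ≤ G s :=
        (measure_mono hsub).trans
          (le_biSup (fun ν : ProbabilityMeasure ℝ => (ν : Measure ℝ) ((Icc (-s) s)ᶜ)) hμ)
      have := ENNReal.toReal_mono (hGne s) h1
      rw [cdf_eq_one_sub μ]
      linarith
    have hftop : Tendsto f atTop (𝓝 1) := by
      refine tendsto_of_tendsto_of_tendsto_of_le_of_le ?_ tendsto_const_nhds hflb hf1
      simpa using tendsto_const_nhds.sub hGto
    set g := hfmono.stieltjesFunction with hgdef
    have hgf : ∀ s, f s ≤ g s := fun s => hfmono.le_rightLim le_rfl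
    have hgle : ∀ s, g s ≤ f (s + 1) := fun s => hfmono.rightLim_le (lt_add_one s)
    have hshift : Tendsto (fun s : ℝ => f (s + 1)) atTop (𝓝 1) :=
      hftop.comp (tendsto_atTop_add_const_right _ 1 tendsto_id)
    have hgtop : Tendsto g atTop (𝓝 1) :=
      tendsto_of_tendsto_of_tendsto_of_le_of_le hftop hshift hgf hgle
    have hshift0 : Tendsto (fun s : ℝ => f (s + 1)) atBot (𝓝 0) := by
      refine tendsto_of_tendsto_of_tendsto_of_le_of_le tendsto_const_nhds
        ((tendsto_cdf_atBot (μ0 : Measure ℝ)).comp (tendsto_atBot_add_const_right _ 1 tendsto_id))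
        (fun s => hf0 _) (fun s => hfle μ0 hμ0 _)
    have hgbot : Tendsto g atBot (𝓝 0) :=
      tendsto_of_tendsto_of_tendsto_of_le_of_le tendsto_const_nhds hshift0
        (fun s => (hf0 s).trans (hgf s)) hgle
    haveI hP : IsProbabilityMeasure g.measure := g.isProbabilityMeasure hgbot hgtop
    set σ : ProbabilityMeasure ℝ := ⟨g.measure, hP⟩ with hσ
    have hc : cdf (σ : Measure ℝ) = g := cdf_measure_stieltjesFunction g hgbot hgtop
    refine ⟨σ, ?_, ?_⟩
    · intro μ hμ
      rw [stOrd_iff_cdf]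
      intro s
      rw [hc]
      have h2 : g s ≤ Function.rightLim (cdf (μ : Measure ℝ)) s :=
        ge_of_tendsto ((monotone_cdf _).tendsto_rightLim s)
          (eventually_nhdsWithin_of_forall fun t ht =>
            (hfmono.rightLim_le ht).trans (hfle μ hμ t))
      rwa [(cdf (μ : Measure ℝ)).rightLim_eq] at h2
    · intro b hb
      rw [stOrd_iff_cdf]
      intro s
      rw [hc]
      have : cdf (b : Measure ℝ) s ≤ f s :=
        le_ciInf fun ⟨μ, hμ⟩ => (stOrd_iff_cdf μ b).1 (hb μ hμ) s
      exact this.trans (hgf s)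
  · set h : ℝ → ℝ := fun s => ⨆ μ : A, cdf ((μ : ProbabilityMeasure ℝ) : Measure ℝ) s with hhdef
    have hbdd : ∀ s, BddAbove (range fun μ : A => cdf ((μ : ProbabilityMeasure ℝ) : Measure ℝ) s) :=
      fun s => ⟨1, by rintro _ ⟨μ, rfl⟩; exact cdf_le_one _ _⟩
    have hhub : ∀ μ (hμ : μ ∈ A) s, cdf (μ : Measure ℝ) s ≤ h s :=
      fun μ hμ s => le_ciSup (hbdd s) ⟨μ, hμ⟩
    have hhmono : Monotone h := fun s t hst =>
      ciSup_le fun μ => ((monotone_cdf _) hst).trans (le_ciSup (hbdd t) μ)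
    have hh1 : ∀ s, h s ≤ 1 := fun s => ciSup_le fun μ => cdf_le_one _ _
    have hh0 : ∀ s, 0 ≤ h s := fun s => (cdf_nonneg _ s).trans (hhub μ0 hμ0 s)
    have hhub2 : ∀ s, h s ≤ (G (-s - 1)).toReal := by
      intro s
      refine ciSup_le fun ⟨μ, hμ⟩ => ?_
      have hsub : Iic s ⊆ (Icc (-(-s - 1)) (-s - 1))ᶜ := by
        intro x hx hx'
        simp only [mem_Icc] at hx'
        simp only [mem_Iic] at hx
        linarith [hx'.1]
      have h1 : (μ : Measure ℝ) (Iic s) ≤ G (-s - 1) :=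
        (measure_mono hsub).trans
          (le_biSup (fun ν : ProbabilityMeasure ℝ => (ν : Measure ℝ) ((Icc (-(-s-1)) (-s-1))ᶜ)) hμ)
      rw [cdf_eq_real]
      exact ENNReal.toReal_mono (hGne _) h1
    have hGcomp : Tendsto (fun s : ℝ => (G (-s - 1)).toReal) atBot (𝓝 0) := by
      refine hGto.comp ?_
      have : Tendsto (fun s : ℝ => -s - 1) atBot atTop :=
        tendsto_atTop_add_const_right _ (-1) tendsto_neg_atBot_atTop
      exact this
    have hhbot : Tendsto h atBot (𝓝 0) :=
      tendsto_of_tendsto_of_tendsto_of_le_of_le tendsto_const_nhds hGcomp hh0 hhub2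
    have hhtop : Tendsto h atTop (𝓝 1) :=
      tendsto_of_tendsto_of_tendsto_of_le_of_le
        ((tendsto_cdf_atTop (μ0 : Measure ℝ))) tendsto_const_nhds (hhub μ0 hμ0) hh1
    set k := hhmono.stieltjesFunction with hkdef
    have hkh : ∀ s, h s ≤ k s := fun s => hhmono.le_rightLim le_rfl
    have hkle : ∀ s, k s ≤ h (s + 1) := fun s => hhmono.rightLim_le (lt_add_one s)
    have hktop : Tendsto k atTop (𝓝 1) :=
      tendsto_of_tendsto_of_tendsto_of_le_of_le hhtop
        (hhtop.comp (tendsto_atTop_add_const_right _ 1 tendsto_id)) hkh hkle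
    have hkbot : Tendsto k atBot (𝓝 0) :=
      tendsto_of_tendsto_of_tendsto_of_le_of_le tendsto_const_nhds
        (hhbot.comp (tendsto_atBot_add_const_right _ 1 tendsto_id))
        (fun s => (hh0 s).trans (hkh s)) hkle
    haveI hP : IsProbabilityMeasure k.measure := k.isProbabilityMeasure hkbot hktop
    set τ : ProbabilityMeasure ℝ := ⟨k.measure, hP⟩ with hτ
    have hc : cdf (τ : Measure ℝ) = k := cdf_measure_stieltjesFunction k hkbot hktop
    refine ⟨τ, ?_, ?_⟩
    · intro μ hμ
      rw [stOrd_iff_cdf]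
      intro s
      rw [hc]
      exact (hhub μ hμ s).trans (hkh s)
    · intro b hb
      rw [stOrd_iff_cdf]
      intro s
      rw [hc]
      have h2 : k s ≤ Function.rightLim (cdf (b : Measure ℝ)) s :=
        ge_of_tendsto ((monotone_cdf _).tendsto_rightLim s)
          (eventually_nhdsWithin_of_forall fun t ht =>
            (hhmono.rightLim_le ht).trans
              (ciSup_le fun ⟨μ, hμ⟩ => (stOrd_iff_cdf b μ).1 (hb μ hμ) t))
      rwa [(cdf (b : Measure ℝ)).rightLim_eq] at h2

open ProbabilityTheory in
lemma tight_of_bounded (K : Set (ProbabilityMeasure ℝ)) (μlow μup : ProbabilityMeasure ℝ)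
    (hb : ∀ μ ∈ K, StOrd μlow μ ∧ StOrd μ μup) :
    Tendsto (fun s : ℝ => ⨆ μ ∈ K, (μ : Measure ℝ) ((Icc (-s) s)ᶜ)) atTop (𝓝 0) := by
  have hB1 : Tendsto (fun s : ℝ => ENNReal.ofReal (cdf (μlow : Measure ℝ) (-s))) atTop (𝓝 0) := by
    have h0 : Tendsto (fun s : ℝ => cdf (μlow : Measure ℝ) (-s)) atTop (𝓝 0) :=
      (tendsto_cdf_atBot (μlow : Measure ℝ)).comp tendsto_neg_atTop_atBot
    simpa using ENNReal.tendsto_ofReal h0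
  have hB2 : Tendsto (fun s : ℝ => ENNReal.ofReal (1 - cdf (μup : Measure ℝ) s)) atTop (𝓝 0) := by
    have h0 : Tendsto (fun s : ℝ => 1 - cdf (μup : Measure ℝ) s) atTop (𝓝 0) := by
      simpa using (tendsto_const_nhds (x := (1:ℝ))).sub (tendsto_cdf_atTop (μup : Measure ℝ))
    simpa using ENNReal.tendsto_ofReal h0
  refine tendsto_of_tendsto_of_tendsto_of_le_of_le (g := fun _ => (0:ℝ≥0∞))
    (h := fun s => ENNReal.ofReal (cdf (μlow : Measure ℝ) (-s))
      + ENNReal.ofReal (1 - cdf (μup : Measure ℝ) s))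
    tendsto_const_nhds (by simpa using hB1.add hB2) (fun s => zero_le) ?_
  intro s
  refine iSup₂_le fun μ hμ => ?_
  obtain ⟨hl, hu⟩ := hb μ hμ
  have hsub : (Icc (-s) s)ᶜ ⊆ Iic (-s) ∪ Ioi s := by
    intro x hx
    simp only [mem_compl_iff, mem_Icc, not_and_or, not_le] at hx
    rcases hx with hx | hx
    · exact Or.inl hx.le
    · exact Or.inr hx
  calc (μ : Measure ℝ) ((Icc (-s) s)ᶜ)
      ≤ (μ : Measure ℝ) (Iic (-s)) + (μ : Measure ℝ) (Ioi s) :=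
        (measure_mono hsub).trans (measure_union_le _ _)
    _ ≤ ENNReal.ofReal (cdf (μlow : Measure ℝ) (-s))
          + ENNReal.ofReal (1 - cdf (μup : Measure ℝ) s) := by
        refine add_le_add ?_ ?_
        · rw [← ofReal_cdf]
          exact ENNReal.ofReal_le_ofReal ((stOrd_iff_cdf μlow μ).1 hl (-s))
        · exact (hu s).trans_eq (meas_Ioi_eq μup s)

open ProbabilityTheory in
lemma tight_psi (K : Set (ProbabilityMeasure ℝ))
    (ht : Tendsto (fun s : ℝ => ⨆ μ ∈ K, (μ : Measure ℝ) ((Icc (-s) s)ᶜ)) atTop (𝓝 0)) :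
    ∃ ψ : ℝ≥0 → ℝ≥0, Monotone ψ ∧ ψ 0 = 0 ∧ Tendsto ψ atTop atTop ∧
      (⨆ μ ∈ K, ∫⁻ x, (ψ ‖x‖₊ : ℝ≥0∞) ∂(μ : Measure ℝ)) < ⊤ := by
  set G : ℝ → ℝ≥0∞ := fun s => ⨆ μ ∈ K, (μ : Measure ℝ) ((Icc (-s) s)ᶜ) with hGdef
  have hu : ∀ n : ℕ, ∃ u : ℝ, ∀ s ≥ u, G s ≤ (2⁻¹ : ℝ≥0∞) ^ n := by
    intro n
    have hpos : (0 : ℝ≥0∞) < 2⁻¹ ^ n :=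
      pos_iff_ne_zero.2 (pow_ne_zero n (by simp))
    have hev := ht.eventually (Iio_mem_nhds hpos)
    rw [eventually_atTop] at hev
    obtain ⟨u, hu⟩ := hev
    exact ⟨u, fun s hs => (hu s hs).le⟩
  choose u hu using hu
  set t : ℕ → ℝ := fun n => max (u n + 1) (n + 1) with htdef
  have ht1 : ∀ n : ℕ, (n : ℝ) + 1 ≤ t n := fun n => le_max_right _ _
  have ht0 : ∀ n : ℕ, 0 ≤ t n := fun n => le_trans (by positivity) (ht1 n)
  have ht2 : ∀ n : ℕ, G (t n - 1) ≤ 2⁻¹ ^ n := fun n =>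
    hu n _ (by have := le_max_left (u n + 1) ((n : ℝ) + 1); simp only [htdef]; linarith)
  set Φ : ℝ≥0 → ℝ≥0∞ := fun s => ∑' n, if t n ≤ (s : ℝ) then (1 : ℝ≥0∞) else 0 with hΦdef
  have hΦfin : ∀ s, Φ s ≠ ⊤ := by
    intro s
    have heq : Φ s = ∑ n ∈ Finset.range ⌈(s : ℝ)⌉₊, if t n ≤ (s : ℝ) then (1 : ℝ≥0∞) else 0 := by
      refine tsum_eq_sum ?_
      intro n hn
      rw [if_neg]
      have h1 : (s : ℝ) ≤ ⌈(s : ℝ)⌉₊ := Nat.le_ceil _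
      have h2 : (⌈(s : ℝ)⌉₊ : ℝ) ≤ n := by
        exact_mod_cast Nat.not_lt.1 (fun hlt => hn (Finset.mem_range.2 hlt))
      have := ht1 n
      push_neg
      linarith
    rw [heq]
    exact (ENNReal.sum_lt_top.2 (fun n _ => by split <;> simp)).ne
  have hΦmono : Monotone Φ := by
    intro a b hab
    refine ENNReal.tsum_le_tsum fun n => ?_
    by_cases h : t n ≤ (a : ℝ)
    · rw [if_pos h, if_pos (h.trans (NNReal.coe_le_coe.2 hab))]
    · simp [h]
  set ψ : ℝ≥0 → ℝ≥0 := fun s => (Φ s).toNNReal with hψdef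
  have hcoe : ∀ s, (ψ s : ℝ≥0∞) = Φ s := fun s => ENNReal.coe_toNNReal (hΦfin s)
  refine ⟨ψ, ?_, ?_, ?_, ?_⟩
  · exact fun a b hab => ENNReal.toNNReal_mono (hΦfin b) (hΦmono hab)
  · have hz : ∀ n : ℕ, (if t n ≤ ((0 : ℝ≥0) : ℝ) then (1 : ℝ≥0∞) else 0) = 0 := fun n =>
      if_neg (by push_cast; nlinarith [ht1 n])
    have h0 : Φ 0 = 0 := by
      calc Φ 0 = ∑' _ : ℕ, (0 : ℝ≥0∞) := by simp only [hΦdef]; exact tsum_congr hz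
        _ = 0 := tsum_zero
    simp [hψdef, h0]
  · rw [tendsto_atTop]
    intro C
    set N := ⌈C⌉₊ with hN
    set M : ℝ≥0 := (Finset.range N).sup fun n => (t n).toNNReal with hM
    filter_upwards [eventually_ge_atTop M] with s hs
    have hall : ∀ n ∈ Finset.range N, t n ≤ (s : ℝ) := by
      intro n hn
      have h1 : (t n).toNNReal ≤ s := (Finset.le_sup hn).trans hs
      have h2 : ((t n).toNNReal : ℝ) ≤ (s : ℝ) := NNReal.coe_le_coe.2 h1
      rwa [Real.coe_toNNReal _ (ht0 n)] at h2
    have hkey : (N : ℝ≥0∞) ≤ Φ s := by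
      calc (N : ℝ≥0∞) = ∑ n ∈ Finset.range N, 1 := by simp
        _ ≤ ∑ n ∈ Finset.range N, (if t n ≤ (s : ℝ) then (1 : ℝ≥0∞) else 0) :=
            Finset.sum_le_sum fun n hn => by rw [if_pos (hall n hn)]
        _ ≤ Φ s := ENNReal.sum_le_tsum _
    have hCN : (C : ℝ≥0∞) ≤ (N : ℝ≥0∞) := by
      exact_mod_cast (Nat.le_ceil C)
    have := (hCN.trans hkey).trans_eq (hcoe s).symm
    exact_mod_cast this
  · have key : ∀ μ ∈ K, ∫⁻ x, (ψ ‖x‖₊ : ℝ≥0∞) ∂(μ : Measure ℝ) ≤ 2 := by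
      intro μ hμ
      have hmeas : ∀ n : ℕ, MeasurableSet {y : ℝ | t n ≤ |y|} :=
        fun n => (isClosed_le continuous_const continuous_abs).measurableSet
      have hrep : ∀ x : ℝ, (ψ ‖x‖₊ : ℝ≥0∞)
          = ∑' n, Set.indicator {y : ℝ | t n ≤ |y|} (fun _ => (1 : ℝ≥0∞)) x := by
        intro x
        rw [hcoe]
        simp only [hΦdef]
        refine tsum_congr fun n => ?_
        have hx : ((‖x‖₊ : ℝ≥0) : ℝ) = |x| := by rw [coe_nnnorm, Real.norm_eq_abs]
        simp [Set.indicator_apply, mem_setOf_eq, hx]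
      calc ∫⁻ x, (ψ ‖x‖₊ : ℝ≥0∞) ∂(μ : Measure ℝ)
          = ∑' n, (μ : Measure ℝ) {y | t n ≤ |y|} := by
            simp_rw [hrep]
            rw [lintegral_tsum fun n => (measurable_const.indicator (hmeas n)).aemeasurable]
            congr 1
            ext n
            exact lintegral_indicator_one (hmeas n)
        _ ≤ ∑' n, (2⁻¹ : ℝ≥0∞) ^ n := by
            refine ENNReal.tsum_le_tsum fun n => ?_
            have hsub : {y : ℝ | t n ≤ |y|} ⊆ (Icc (-(t n - 1)) (t n - 1))ᶜ := by
              intro y hy hy'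
              simp only [mem_setOf_eq] at hy
              have := abs_le.2 ⟨hy'.1, hy'.2⟩
              linarith
            refine le_trans (measure_mono hsub) (le_trans ?_ (ht2 n))
            exact le_biSup (fun ν : ProbabilityMeasure ℝ =>
              (ν : Measure ℝ) ((Icc (-(t n - 1)) (t n - 1))ᶜ)) hμ
        _ ≤ 2 := by
            rw [ENNReal.tsum_geometric, ENNReal.one_sub_inv_two]
            simp
    exact lt_of_le_of_lt (iSup₂_le key) (by simp)

open ProbabilityTheory in
lemma tight_of_psi (K : Set (ProbabilityMeasure ℝ)) (ψ : ℝ≥0 → ℝ≥0) (hmono : Monotone ψ)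
    (hψtop : Tendsto ψ atTop atTop)
    (hC : (⨆ μ ∈ K, ∫⁻ x, (ψ ‖x‖₊ : ℝ≥0∞) ∂(μ : Measure ℝ)) < ⊤) :
    Tendsto (fun s : ℝ => ⨆ μ ∈ K, (μ : Measure ℝ) ((Icc (-s) s)ᶜ)) atTop (𝓝 0) := by
  set C : ℝ≥0∞ := ⨆ μ ∈ K, ∫⁻ x, (ψ ‖x‖₊ : ℝ≥0∞) ∂(μ : Measure ℝ) with hCdef
  have hmeas : Measurable fun x : ℝ => (ψ ‖x‖₊ : ℝ≥0∞) :=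
    measurable_coe_nnreal_ennreal.comp (hmono.measurable.comp measurable_nnnorm)
  obtain ⟨a, ha⟩ := eventually_atTop.1 (hψtop.eventually_ge_atTop 1)
  have hB : Tendsto (fun s : ℝ => C / (ψ s.toNNReal : ℝ≥0∞)) atTop (𝓝 0) := by
    have h1 : Tendsto (fun s : ℝ => (ψ s.toNNReal : ℝ≥0∞)) atTop (𝓝 ⊤) :=
      ENNReal.tendsto_coe_nhds_top.2 (hψtop.comp tendsto_real_toNNReal_atTop)
    have h2 : Tendsto (fun s : ℝ => (ψ s.toNNReal : ℝ≥0∞)⁻¹) atTop (𝓝 0) := by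
      have := ENNReal.tendsto_inv_iff.2 h1
      simpa using this
    have h3 := ENNReal.Tendsto.const_mul h2 (Or.inr hC.ne)
    simp only [mul_zero] at h3
    simpa [div_eq_mul_inv] using h3
  refine tendsto_of_tendsto_of_tendsto_of_le_of_le' tendsto_const_nhds hB
    (Eventually.of_forall fun s => zero_le) ?_
  filter_upwards [eventually_ge_atTop ((a : ℝ))] with s hs
  refine iSup₂_le fun μ hμ => ?_
  have hs0 : 0 ≤ s := le_trans a.coe_nonneg hs
  have hsa : a ≤ s.toNNReal := by
    rw [← Real.toNNReal_coe (r := a)]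
    exact Real.toNNReal_mono hs
  have hψs : 1 ≤ ψ s.toNNReal := ha _ hsa
  have hε0 : (ψ s.toNNReal : ℝ≥0∞) ≠ 0 := by
    simp only [ne_eq, ENNReal.coe_eq_zero]
    exact (zero_lt_one.trans_le hψs).ne'
  calc (μ : Measure ℝ) ((Icc (-s) s)ᶜ)
      ≤ (μ : Measure ℝ) {x | (ψ s.toNNReal : ℝ≥0∞) ≤ (ψ ‖x‖₊ : ℝ≥0∞)} := by
        refine measure_mono fun x hx => ?_
        simp only [mem_compl_iff, mem_Icc, not_and_or, not_le] at hx
        have habs : s ≤ |x| := by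
          rcases hx with hx | hx
          · calc s ≤ -x := by linarith
              _ ≤ |x| := by rw [abs_eq_max_neg]; exact le_max_right _ _
          · exact hx.le.trans (le_abs_self x)
        have : s.toNNReal ≤ ‖x‖₊ := by
          rw [Real.toNNReal_le_iff_le_coe]
          rw [coe_nnnorm, Real.norm_eq_abs]
          exact habs
        exact ENNReal.coe_le_coe.2 (hmono this)
    _ ≤ (∫⁻ x, (ψ ‖x‖₊ : ℝ≥0∞) ∂(μ : Measure ℝ)) / (ψ s.toNNReal : ℝ≥0∞) :=
        meas_ge_le_lintegral_div hmeas.aemeasurable hε0 ENNReal.coe_ne_top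
    _ ≤ C / (ψ s.toNNReal : ℝ≥0∞) := by
        gcongr
        exact le_biSup (fun ν : ProbabilityMeasure ℝ =>
          ∫⁻ x, (ψ ‖x‖₊ : ℝ≥0∞) ∂(ν : Measure ℝ)) hμ


/-- **Statement 10.** For `K ⊆ P(ℝ)` the following are equivalent: (i) `K` is tight; (ii) `K`
is `≤st`-bounded; (iii) every nonempty subset of `K` has a least upper bound and a greatest
lower bound in `(P(ℝ), ≤st)`; (iv) there is a nondecreasing `ψ : [0,∞) → [0,∞)` with
`ψ(0) = 0`, `ψ(s) → ∞` and `sup_{μ∈K} ∫ ψ(|x|) dμ(x) < ∞`. -/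
theorem stmt_10 (K : Set (ProbabilityMeasure ℝ)) :
    (Tendsto (fun s : ℝ => ⨆ μ ∈ K, (μ : Measure ℝ) ((Icc (-s) s)ᶜ)) atTop (𝓝 0) ↔
      ∃ μlow μup : ProbabilityMeasure ℝ, ∀ μ ∈ K, StOrd μlow μ ∧ StOrd μ μup) ∧
    (Tendsto (fun s : ℝ => ⨆ μ ∈ K, (μ : Measure ℝ) ((Icc (-s) s)ᶜ)) atTop (𝓝 0) ↔
      ∀ A ⊆ K, A.Nonempty →
        (∃ σ : ProbabilityMeasure ℝ, (∀ μ ∈ A, StOrd μ σ) ∧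
          (∀ b, (∀ μ ∈ A, StOrd μ b) → StOrd σ b)) ∧
        (∃ τ : ProbabilityMeasure ℝ, (∀ μ ∈ A, StOrd τ μ) ∧
          (∀ b, (∀ μ ∈ A, StOrd b μ) → StOrd b τ))) ∧
    (Tendsto (fun s : ℝ => ⨆ μ ∈ K, (μ : Measure ℝ) ((Icc (-s) s)ᶜ)) atTop (𝓝 0) ↔
      ∃ ψ : ℝ≥0 → ℝ≥0, Monotone ψ ∧ ψ 0 = 0 ∧ Tendsto ψ atTop atTop ∧
        (⨆ μ ∈ K, ∫⁻ x, (ψ ‖x‖₊ : ℝ≥0∞) ∂(μ : Measure ℝ)) < ⊤) := by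
  refine ⟨⟨?_, ?_⟩, ⟨?_, ?_⟩, ⟨?_, ?_⟩⟩
  · -- tight → bounded
    intro h
    by_cases hK : K.Nonempty
    · obtain ⟨⟨σ, hσ, -⟩, ⟨τ, hτ, -⟩⟩ := tight_lub_glb K hK h
      exact ⟨τ, σ, fun μ hμ => ⟨hτ μ hμ, hσ μ hμ⟩⟩
    · refine ⟨⟨Measure.dirac 0, Measure.dirac.isProbabilityMeasure⟩,
        ⟨Measure.dirac 0, Measure.dirac.isProbabilityMeasure⟩, fun μ hμ => (hK ⟨μ, hμ⟩).elim⟩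
  · -- bounded → tight
    rintro ⟨μlow, μup, hb⟩
    exact tight_of_bounded K μlow μup hb
  · -- tight → lub/glb
    intro h A hA hne
    refine tight_lub_glb A hne ?_
    refine tendsto_of_tendsto_of_tendsto_of_le_of_le tendsto_const_nhds h
      (fun s => zero_le) (fun s => ?_)
    exact biSup_mono fun μ hμ => hA hμ
  · -- lub/glb → tight
    intro h
    by_cases hK : K.Nonempty
    · obtain ⟨⟨σ, hσ, -⟩, ⟨τ, hτ, -⟩⟩ := h K subset_rfl hK
      exact tight_of_bounded K τ σ fun μ hμ => ⟨hτ μ hμ, hσ μ hμ⟩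
    · rw [not_nonempty_iff_eq_empty] at hK
      subst hK
      have heq : (fun s : ℝ => ⨆ μ ∈ (∅ : Set (ProbabilityMeasure ℝ)),
          (μ : Measure ℝ) ((Icc (-s) s)ᶜ)) = fun _ => 0 := by simp
      rw [heq]
      exact tendsto_const_nhds
  · -- tight → ψ
    exact tight_psi K
  · -- ψ → tight
    rintro ⟨ψ, hmono, -, hψtop, hC⟩
    exact tight_of_psi K ψ hmono hψtop hC
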